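/- A finite poset P is an interval order (i.e., admits an assignment of closed real intervals [l(x), r(x)] to elements such that x < y in P iff r(x) < l(y)) if and only if P contains no subposet isomorphic to 2+2 (the disjoint union of two 2-element chains). -/
import Mathlib


/-- Two elements are incomparable in a poset. -/
def Incomp {α : Type*} [PartialOrder α] (x y : α) : Prop := ¬ x ≤ y ∧ ¬ y ≤ x

/-- The poset contains a subposet isomorphic to 2+2 (two disjoint 2-chains). -/
def HasTwoPlusTwo (α : Type*) [PartialOrder α] : Prop :=
  ∃ a₁ b₁ a₂ b₂ : α, a₁ < b₁ ∧ a₂ < b₂ ∧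
    Incomp a₁ a₂ ∧ Incomp a₁ b₂ ∧ Incomp b₁ a₂ ∧ Incomp b₁ b₂

theorem stmt_0 {α : Type*} [Fintype α] [PartialOrder α] :
    (∃ l r : α → ℝ, (∀ x, l x ≤ r x) ∧ ∀ x y : α, x < y ↔ r x < l y) ↔
      ¬ HasTwoPlusTwo α := by
  constructor
  · rintro ⟨l, r, _, h⟩ ⟨a₁, b₁, a₂, b₂, h1, h2, _, hi1b2, hib1a2, _⟩
    have e1 : r a₁ < l b₁ := (h _ _).mp h1
    have e2 : r a₂ < l b₂ := (h _ _).mp h2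
    have e3 : l b₂ ≤ r a₁ := not_lt.mp fun hc => hi1b2.1 (le_of_lt ((h _ _).mpr hc))
    have e4 : l b₁ ≤ r a₂ := not_lt.mp fun hc => hib1a2.2 (le_of_lt ((h _ _).mpr hc))
    linarith
  · intro hno
    classical
    set D : α → Finset α := fun x => Finset.univ.filter (fun z => z < x) with hD
    have mem_D : ∀ z x : α, z ∈ D x ↔ z < x := by
      intro z x; simp [hD]
    -- totality of down-sets
    have total : ∀ x y : α, D x ⊆ D y ∨ D y ⊆ D x := by
      intro x y
      by_contra hc
      push_neg at hc
      obtain ⟨h1, h2⟩ := hc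
      obtain ⟨a₂, ha2x, ha2y⟩ := Finset.not_subset.mp h1
      obtain ⟨a₁, ha1y, ha1x⟩ := Finset.not_subset.mp h2
      rw [mem_D] at ha2x ha1y
      rw [mem_D] at ha2y ha1x
      refine hno ⟨a₁, y, a₂, x, ha1y, ha2x, ?_, ?_, ?_, ?_⟩
      · constructor
        · intro hle; exact ha1x (lt_of_le_of_lt hle ha2x)
        · intro hle; exact ha2y (lt_of_le_of_lt hle ha1y)
      · constructor
        · intro hle
          rcases lt_or_eq_of_le hle with h | h
          · exact ha1x h
          · subst h; exact ha2y (ha2x.trans ha1y)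
        · intro hle; exact ha2y (lt_of_lt_of_le ha2x (hle.trans ha1y.le))
      · constructor
        · intro hle; exact ha1x (lt_of_lt_of_le ha1y (hle.trans ha2x.le))
        · intro hle
          rcases lt_or_eq_of_le hle with h | h
          · exact ha2y h
          · subst h; exact ha1x (ha1y.trans ha2x)
      · constructor
        · intro hle; exact ha1x (lt_of_lt_of_le ha1y hle)
        · intro hle; exact ha2y (lt_of_lt_of_le ha2x hle)
    set S : Finset (Finset α) := Finset.univ.image D with hS
    have DmemS : ∀ x : α, D x ∈ S := fun x =>
      Finset.mem_image.mpr ⟨x, Finset.mem_univ x, rfl⟩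
    -- key counting lemma
    have key : ∀ x y : α, ¬ x < y →
        (S.filter (fun E => E ⊂ D y)).card + 1 ≤ (S.filter (fun E => x ∉ E)).card := by
      intro x y hxy
      have hxDy : x ∉ D y := fun h => hxy ((mem_D x y).mp h)
      have hnot : D y ∉ S.filter (fun E => E ⊂ D y) := by
        intro h
        exact (Finset.mem_filter.mp h).2.ne rfl
      have hsub : insert (D y) (S.filter (fun E => E ⊂ D y)) ⊆
          S.filter (fun E => x ∉ E) := by
        intro E hE
        rcases Finset.mem_insert.mp hE with h | h
        · subst h; exact Finset.mem_filter.mpr ⟨DmemS y, hxDy⟩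
        · obtain ⟨hES, hEsub⟩ := Finset.mem_filter.mp h
          exact Finset.mem_filter.mpr ⟨hES, fun hx => hxDy (hEsub.subset hx)⟩
      calc (S.filter (fun E => E ⊂ D y)).card + 1
          = (insert (D y) (S.filter (fun E => E ⊂ D y))).card := by
            rw [Finset.card_insert_of_notMem hnot]
        _ ≤ (S.filter (fun E => x ∉ E)).card := Finset.card_le_card hsub
    refine ⟨fun y => ((S.filter (fun E => E ⊂ D y)).card : ℝ),
      fun x => ((S.filter (fun E => x ∉ E)).card : ℝ) - 1, ?_, ?_⟩
    · intro x
      dsimp only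
      have := key x x (lt_irrefl x)
      have h' : ((S.filter (fun E => E ⊂ D x)).card : ℝ) + 1 ≤
          ((S.filter (fun E => x ∉ E)).card : ℝ) := by exact_mod_cast this
      linarith
    · intro x y
      dsimp only
      constructor
      · intro hxy
        have hsub : S.filter (fun E => x ∉ E) ⊆ S.filter (fun E => E ⊂ D y) := by
          intro E hE
          obtain ⟨hES, hxE⟩ := Finset.mem_filter.mp hE
          obtain ⟨z, _, rfl⟩ := Finset.mem_image.mp hES
          have hxy' : x ∈ D y := (mem_D x y).mpr hxy
          rcases total z y with h | h
          · refine Finset.mem_filter.mpr ⟨hES, h.ssubset_of_ne ?_⟩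
            intro he; rw [he] at hxE; exact hxE hxy'
          · exact absurd (h hxy') hxE
        have hcard := Finset.card_le_card hsub
        have h' : ((S.filter (fun E => x ∉ E)).card : ℝ) ≤
            ((S.filter (fun E => E ⊂ D y)).card : ℝ) := by exact_mod_cast hcard
        linarith
      · intro hrl
        by_contra hxy
        have := key x y hxy
        have h' : ((S.filter (fun E => E ⊂ D y)).card : ℝ) + 1 ≤
            ((S.filter (fun E => x ∉ E)).card : ℝ) := by exact_mod_cast this
        linarith only [h', hrl]
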